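/- Let H be a real Hilbert space, Γ ⊆ H totally bounded, and f in the closed linear span H_Γ of Γ. Suppose (g_n)_{n∈ℕ} is a sequence in Γ such that Λ_n := {g_1,…,g_n} is linearly independent for every n and the f/P-greedy selection rule holds: |⟪f − I_{Λ_n}(f), g_{n+1}⟫| / P_{Λ_n}(g_{n+1}) = sup_{g∈Γ, P_{Λ_n}(g)>0} |⟪f − I_{Λ_n}(f), g⟫| / P_{Λ_n}(g) for every n. Then ‖f − I_{Λ_n}(f)‖ → 0 as n → ∞. -/

import Mathlib

open Filter
open scoped RealInnerProductSpace ENNReal Topology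

/-- Generalized interpolation operator: orthogonal projection onto the span of `Λ`. -/
noncomputable def interp {H : Type*} [NormedAddCommGroup H] [InnerProductSpace ℝ H]
    (Λ : Finset H) (f : H) : H :=
  haveI : FiniteDimensional ℝ (Submodule.span ℝ (Λ : Set H)) :=
    FiniteDimensional.span_of_finite ℝ Λ.finite_toSet
  ((Submodule.span ℝ (Λ : Set H)).orthogonalProjection f : H)

/-- Generalized power function: distance from `g` to the span of `Λ`. -/
noncomputable def powerFn {H : Type*} [NormedAddCommGroup H] [InnerProductSpace ℝ H]
    (Λ : Finset H) (g : H) : ℝ := ‖g - interp Λ g‖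

section Aux

variable {H : Type*} [NormedAddCommGroup H] [InnerProductSpace ℝ H]

lemma span_fd (Λ : Finset H) : FiniteDimensional ℝ (Submodule.span ℝ (Λ : Set H)) :=
  FiniteDimensional.span_of_finite ℝ Λ.finite_toSet

lemma interp_eq (Λ : Finset H) (f : H) :
    haveI := span_fd Λ
    interp Λ f = ((Submodule.span ℝ (Λ : Set H)).orthogonalProjection f : H) := rfl

lemma interp_mem (Λ : Finset H) (f : H) : interp Λ f ∈ Submodule.span ℝ (Λ : Set H) := by
  haveI := span_fd Λ
  rw [interp_eq]
  exact ((Submodule.span ℝ (Λ : Set H)).orthogonalProjection f).2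

lemma sub_interp_mem_orthogonal (Λ : Finset H) (f : H) :
    f - interp Λ f ∈ (Submodule.span ℝ (Λ : Set H))ᗮ := by
  haveI := span_fd Λ
  rw [interp_eq]
  exact (Submodule.span ℝ (Λ : Set H)).sub_starProjection_mem_orthogonal f

/-- inner product of the residual with any element of the span vanishes -/
lemma inner_residual_eq_zero (Λ : Finset H) (f : H) {v : H}
    (hv : v ∈ Submodule.span ℝ (Λ : Set H)) : ⟪f - interp Λ f, v⟫ = 0 := by
  have := sub_interp_mem_orthogonal Λ f
  rw [Submodule.mem_orthogonal] at this
  rw [real_inner_comm]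
  exact this v hv

/-- minimality of the orthogonal projection -/
lemma norm_sub_interp_le (Λ : Finset H) (f : H) {v : H}
    (hv : v ∈ Submodule.span ℝ (Λ : Set H)) : ‖f - interp Λ f‖ ≤ ‖f - v‖ := by
  have hinner : ⟪f - interp Λ f, interp Λ f - v⟫ = 0 :=
    inner_residual_eq_zero Λ f (Submodule.sub_mem _ (interp_mem Λ f) hv)
  have hdecomp : f - v = (f - interp Λ f) + (interp Λ f - v) := by abel
  have hsq : ‖f - v‖ ^ 2 = ‖f - interp Λ f‖ ^ 2 + ‖interp Λ f - v‖ ^ 2 := by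
    rw [hdecomp, norm_add_sq_real, hinner]; ring
  have h2 : ‖f - interp Λ f‖ ^ 2 ≤ ‖f - v‖ ^ 2 := by nlinarith [sq_nonneg ‖interp Λ f - v‖]
  have := Real.sqrt_le_sqrt h2
  rwa [Real.sqrt_sq (norm_nonneg _), Real.sqrt_sq (norm_nonneg _)] at this

lemma powerFn_nonneg (Λ : Finset H) (v : H) : 0 ≤ powerFn Λ v := norm_nonneg _

lemma powerFn_le_norm (Λ : Finset H) (v : H) : powerFn Λ v ≤ ‖v‖ := by
  simpa [powerFn] using norm_sub_interp_le Λ v (Submodule.zero_mem _)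

lemma mem_span_of_powerFn_eq_zero {Λ : Finset H} {v : H} (h : powerFn Λ v = 0) :
    v ∈ Submodule.span ℝ (Λ : Set H) := by
  have : v - interp Λ v = 0 := by
    rwa [powerFn, norm_eq_zero] at h
  have hv : v = interp Λ v := sub_eq_zero.1 this
  rw [hv]; exact interp_mem Λ v

end Aux

/-- convergence of the `f/P`-greedy algorithm on a totally bounded set `Γ`.
The sequence is `0`-indexed: `Λ n = {g_0, …, g_{n-1}}`, and the selection rule states that
`g_n` maximizes the ratio `γ ↦ |⟪f - I_{Λ n}(f), γ⟫| / P_{Λ n}(γ)` over all `γ ∈ Γ` with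
`P_{Λ n}(γ) > 0`. -/
theorem stmt_14 {H : Type*} [NormedAddCommGroup H] [InnerProductSpace ℝ H] [CompleteSpace H]
    [DecidableEq H] (Γ : Set H) (hΓ : TotallyBounded Γ)
    (f : H) (hf : f ∈ closure (Submodule.span ℝ Γ : Set H))
    (g : ℕ → H) (hmem : ∀ n, g n ∈ Γ)
    (hli : ∀ n, LinearIndependent (ι := (((Finset.range n).image g : Finset H) : Set H))
      ℝ Subtype.val)
    (hgreedy : ∀ (n : ℕ), ∀ γ ∈ Γ, 0 < powerFn ((Finset.range n).image g) γ →
      |⟪f - interp ((Finset.range n).image g) f, γ⟫| /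
          powerFn ((Finset.range n).image g) γ ≤
        |⟪f - interp ((Finset.range n).image g) f, g n⟫| /
          powerFn ((Finset.range n).image g) (g n)) :
    Tendsto (fun n => ‖f - interp ((Finset.range n).image g) f‖) atTop (𝓝 0) := by
  classical
  set Λ : ℕ → Finset H := fun n => (Finset.range n).image g with hΛ
  set r : ℕ → H := fun n => f - interp (Λ n) f with hr
  set a : ℕ → ℝ := fun n => |⟪r n, g n⟫| / powerFn (Λ n) (g n) with ha
  have ha_nonneg : ∀ n, 0 ≤ a n := fun n => div_nonneg (abs_nonneg _) (powerFn_nonneg _ _)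
  -- the spans are nested
  have hspan_mono : ∀ n, Submodule.span ℝ ((Λ n : Set H)) ≤ Submodule.span ℝ ((Λ (n+1) : Set H)) := by
    intro n
    apply Submodule.span_mono
    exact_mod_cast Finset.image_subset_image (Finset.range_subset_range.2 (Nat.le_succ n))
  have hgn_mem : ∀ n, g n ∈ Submodule.span ℝ ((Λ (n+1) : Set H)) := by
    intro n
    apply Submodule.subset_span
    exact_mod_cast Finset.mem_image_of_mem g (Finset.self_mem_range_succ n)
  -- key energy inequality
  have key : ∀ n, ‖r (n+1)‖ ^ 2 + a n ^ 2 ≤ ‖r n‖ ^ 2 := by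
    intro n
    rcases eq_or_lt_of_le (powerFn_nonneg (Λ n) (g n)) with hp | hp
    · -- degenerate case: a n = 0 and projection error decreases
      have han : a n = 0 := by rw [ha]; simp [← hp]
      have hle : ‖r (n+1)‖ ≤ ‖r n‖ :=
        norm_sub_interp_le (Λ (n+1)) f (hspan_mono n (interp_mem (Λ n) f))
      rw [han]
      have h2 : ‖r (n+1)‖ ^ 2 ≤ ‖r n‖ ^ 2 := by
        apply pow_le_pow_left₀ (norm_nonneg _) hle
      linarith
    · -- main case
      set p : ℝ := powerFn (Λ n) (g n) with hpdef
      set u : H := g n - interp (Λ n) (g n) with hu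
      have hup : ‖u‖ = p := rfl
      set e : H := p⁻¹ • u with he
      have hne : ‖e‖ = 1 := by
        rw [he, norm_smul, hup, Real.norm_eq_abs, abs_inv, abs_of_pos hp, inv_mul_cancel₀ hp.ne']
      have he_mem : e ∈ Submodule.span ℝ ((Λ (n+1) : Set H)) := by
        apply Submodule.smul_mem
        exact Submodule.sub_mem _ (hgn_mem n) (hspan_mono n (interp_mem (Λ n) (g n)))
      set c : ℝ := ⟪r n, e⟫ with hc
      set v : H := interp (Λ n) f + c • e with hv
      have hv_mem : v ∈ Submodule.span ℝ ((Λ (n+1) : Set H)) :=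
        Submodule.add_mem _ (hspan_mono n (interp_mem (Λ n) f)) (Submodule.smul_mem _ _ he_mem)
      have hle : ‖r (n+1)‖ ≤ ‖f - v‖ := norm_sub_interp_le (Λ (n+1)) f hv_mem
      have hfv : f - v = r n - c • e := by rw [hv, hr]; exact sub_add_eq_sub_sub _ _ _
      have hnormfv : ‖f - v‖ ^ 2 = ‖r n‖ ^ 2 - c ^ 2 := by
        rw [hfv, norm_sub_sq_real, real_inner_smul_right, ← hc, norm_smul, hne]
        simp [abs_of_nonneg, sq_abs]
        ring
      -- identify c with the greedy ratio
      have hinterp_zero : ⟪r n, interp (Λ n) (g n)⟫ = 0 :=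
        inner_residual_eq_zero (Λ n) f (interp_mem (Λ n) (g n))
      have hcval : c = ⟪r n, g n⟫ / p := by
        rw [hc, he, real_inner_smul_right, hu, inner_sub_right, hinterp_zero]
        rw [div_eq_inv_mul]
        ring_nf
      have hac : a n ^ 2 = c ^ 2 := by
        rw [ha, hcval, div_pow, div_pow, sq_abs]
      have h2 : ‖r (n+1)‖ ^ 2 ≤ ‖f - v‖ ^ 2 := pow_le_pow_left₀ (norm_nonneg _) hle 2
      rw [hac]
      linarith [hnormfv ▸ h2]
  -- partial sums are bounded, so `a n → 0`
  have hsum : ∀ N, ∑ k ∈ Finset.range N, a k ^ 2 ≤ ‖r 0‖ ^ 2 := by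
    intro N
    have : ∀ N, ∑ k ∈ Finset.range N, a k ^ 2 + ‖r N‖ ^ 2 ≤ ‖r 0‖ ^ 2 := by
      intro N
      induction N with
      | zero => simp
      | succ n ih =>
        rw [Finset.sum_range_succ]
        have := key n
        linarith
    have := this N
    nlinarith [sq_nonneg ‖r N‖]
  have hsummable : Summable (fun n => a n ^ 2) :=
    summable_of_sum_range_le (fun n => sq_nonneg _) hsum
  have hsq_tendsto : Tendsto (fun n => a n ^ 2) atTop (𝓝 0) := hsummable.tendsto_atTop_zero
  have ha_tendsto : Tendsto a atTop (𝓝 0) := by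
    have h1 : Tendsto (fun n => Real.sqrt (a n ^ 2)) atTop (𝓝 0) := by
      have := (Real.continuous_sqrt.tendsto 0).comp hsq_tendsto
      simpa [Function.comp_def] using this
    have h2 : (fun n => Real.sqrt (a n ^ 2)) = a := by
      funext n; rw [Real.sqrt_sq (ha_nonneg n)]
    rwa [h2] at h1
  -- uniform bound on inner products over Γ
  have hC : ∀ n, ∀ γ ∈ Γ, |⟪r n, γ⟫| ≤ a n * ‖γ‖ := by
    intro n γ hγ
    rcases eq_or_lt_of_le (powerFn_nonneg (Λ n) γ) with hp | hp
    · have : ⟪r n, γ⟫ = 0 :=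
        inner_residual_eq_zero (Λ n) f (mem_span_of_powerFn_eq_zero hp.symm)
      rw [this, abs_zero]
      exact mul_nonneg (ha_nonneg n) (norm_nonneg _)
    · have h1 := hgreedy n γ hγ hp
      rw [div_le_iff₀ hp] at h1
      calc |⟪r n, γ⟫| ≤ a n * powerFn (Λ n) γ := h1
        _ ≤ a n * ‖γ‖ := by
            exact mul_le_mul_of_nonneg_left (powerFn_le_norm _ _) (ha_nonneg n)
  -- residual norm is bounded by ‖f‖
  have hr_le : ∀ n, ‖r n‖ ≤ ‖f‖ := by
    intro n
    simpa using norm_sub_interp_le (Λ n) f (Submodule.zero_mem _)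
  -- ‖r n‖² = ⟪r n, f⟫
  have hr_sq : ∀ n, ‖r n‖ ^ 2 = ⟪r n, f⟫ := by
    intro n
    have h0 : ⟪r n, interp (Λ n) f⟫ = 0 :=
      inner_residual_eq_zero (Λ n) f (interp_mem (Λ n) f)
    have hsplit : r n + interp (Λ n) f = f := sub_add_cancel _ _
    have : ⟪r n, f⟫ = ⟪r n, r n⟫ + ⟪r n, interp (Λ n) f⟫ := by
      conv_lhs => rw [← hsplit]
      rw [inner_add_right]
    rw [this, h0, add_zero, real_inner_self_eq_norm_sq]
  -- conclude
  rw [Metric.tendsto_atTop]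
  intro ε hε
  -- approximate f by an element of the span
  have hδpos : 0 < ε ^ 2 / (2 * (‖f‖ + 1)) := by positivity
  obtain ⟨s, hs_mem, hs_close⟩ : ∃ s ∈ (Submodule.span ℝ Γ : Set H), dist f s < ε ^ 2 / (2 * (‖f‖ + 1)) := by
    rw [Metric.mem_closure_iff] at hf
    exact hf _ hδpos
  obtain ⟨m, cf, γf, hrep⟩ := Submodule.mem_span_set'.1 hs_mem
  set K : ℝ := ∑ i : Fin m, |cf i| * ‖(γf i : H)‖ with hK
  have hK_nonneg : 0 ≤ K := Finset.sum_nonneg fun i _ => mul_nonneg (abs_nonneg _) (norm_nonneg _)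
  -- bound ⟪r n, s⟫
  have hrs : ∀ n, |⟪r n, s⟫| ≤ a n * K := by
    intro n
    rw [← hrep, inner_sum]
    calc |∑ i : Fin m, ⟪r n, cf i • (γf i : H)⟫|
        ≤ ∑ i : Fin m, |⟪r n, cf i • (γf i : H)⟫| := Finset.abs_sum_le_sum_abs _ _
      _ ≤ ∑ i : Fin m, |cf i| * (a n * ‖(γf i : H)‖) := by
          apply Finset.sum_le_sum
          intro i _
          rw [real_inner_smul_right, abs_mul]
          exact mul_le_mul_of_nonneg_left (hC n _ (γf i).2) (abs_nonneg _)
      _ = a n * K := by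
          rw [hK, Finset.mul_sum]
          congr 1; funext i; ring
  -- eventually a n * K is small
  have hmulK : Tendsto (fun n => a n * K) atTop (𝓝 0) := by
    simpa using ha_tendsto.mul_const K
  have hev : ∀ᶠ n in atTop, a n * K < ε ^ 2 / 2 := by
    have := hmulK.eventually (eventually_lt_nhds (show (0:ℝ) < ε ^ 2 / 2 by positivity))
    simpa using this
  rw [eventually_atTop] at hev
  obtain ⟨N, hN⟩ := hev
  refine ⟨N, fun n hn => ?_⟩
  have hbound : ‖r n‖ ^ 2 < ε ^ 2 := by
    have hsplit2 : (f - s) + s = f := by abel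
    have h1 : ‖r n‖ ^ 2 = ⟪r n, f - s⟫ + ⟪r n, s⟫ := by
      rw [hr_sq n]
      conv_lhs => rw [← hsplit2]
      rw [inner_add_right]
    have h2 : ⟪r n, f - s⟫ ≤ ‖r n‖ * ‖f - s‖ := real_inner_le_norm _ _
    have h3 : ‖f - s‖ < ε ^ 2 / (2 * (‖f‖ + 1)) := by rwa [dist_eq_norm] at hs_close
    have h4 : ‖r n‖ * ‖f - s‖ ≤ ‖f‖ * (ε ^ 2 / (2 * (‖f‖ + 1))) := by
      apply mul_le_mul (hr_le n) h3.le (norm_nonneg _) (norm_nonneg _)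
    have h5 : ‖f‖ * (ε ^ 2 / (2 * (‖f‖ + 1))) ≤ ε ^ 2 / 2 := by
      rw [mul_comm, div_mul_eq_mul_div, div_le_div_iff₀ (by positivity) two_pos]
      nlinarith [norm_nonneg f, sq_nonneg ε]
    have h6 : ⟪r n, s⟫ ≤ a n * K := le_trans (le_abs_self _) (hrs n)
    have h7 : a n * K < ε ^ 2 / 2 := hN n hn
    linarith
  have : ‖r n‖ < ε := lt_of_pow_lt_pow_left₀ 2 hε.le hbound
  rw [Real.dist_eq, sub_zero, abs_of_nonneg (norm_nonneg _)]
  calc ‖f - interp ((Finset.range n).image g) f‖ = ‖r n‖ := rfl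
    _ < ε := this
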